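/- Let K > 1 be real, χ ∈ (0,1), and N ≥ 2 a natural number. Suppose C_N ∈ (0,1) satisfies C_N − χ·(C_N/K)^{N−1} = 1 − χ and C_{N+1} ∈ (0,1) satisfies C_{N+1} − χ·(C_{N+1}/K)^{N} = 1 − χ. Then C_{N+1} < C_N. -/

import Mathlib

theorem pgg_cutoff_strict_anti_in_N
    (K : ℝ) (hK : 1 < K) (χ : ℝ) (hχ : χ ∈ Set.Ioo (0:ℝ) 1)
    (N : ℕ) (hN : 2 ≤ N)
    (CN CN1 : ℝ) (hCN : CN ∈ Set.Ioo (0:ℝ) 1) (hCN1 : CN1 ∈ Set.Ioo (0:ℝ) 1)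
    (heqN : CN - χ * (CN / K) ^ (N - 1) = 1 - χ)
    (heqN1 : CN1 - χ * (CN1 / K) ^ N = 1 - χ) :
    CN1 < CN := by
  obtain ⟨hχ0, hχ1⟩ := hχ
  obtain ⟨hCN0, hCNlt⟩ := hCN
  obtain ⟨hC10, hC1lt⟩ := hCN1
  have hK0 : (0:ℝ) < K := lt_trans one_pos hK
  obtain ⟨m, rfl⟩ : ∃ m, N = m + 2 := ⟨N - 2, by omega⟩
  have hm1 : m + 2 - 1 = m + 1 := rfl
  rw [hm1] at heqN
  by_contra hle
  push_neg at hle  -- CN ≤ CN1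
  have hCNK : CN / K < 1 := by rw [div_lt_one hK0]; linarith
  have hC1K0 : 0 < CN1 / K := by positivity
  have hC1K : CN1 / K < 1 := by rw [div_lt_one hK0]; linarith
  rcases eq_or_lt_of_le hle with heq | hlt
  · -- equality case: impossible
    subst heq
    have hp : (CN / K) ^ (m + 2) < (CN / K) ^ (m + 1) :=
      pow_lt_pow_right_of_lt_one₀ (by positivity) hCNK (by omega)
    nlinarith
  · -- strict case CN < CN1 : convexity contradiction
    set lam : ℝ := (1 - CN1) / (1 - CN) with hlam
    set mu : ℝ := (CN1 - CN) / (1 - CN) with hmu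
    have hden : (0:ℝ) < 1 - CN := by linarith
    have hdne : (1:ℝ) - CN ≠ 0 := ne_of_gt hden
    have hlam0 : 0 ≤ lam := by
      rw [hlam]; apply div_nonneg <;> linarith
    have hmu0 : 0 < mu := by
      rw [hmu]; apply div_pos <;> linarith
    have hsum : lam + mu = 1 := by
      rw [hlam, hmu, ← add_div, div_eq_one_iff_eq hdne]; ring
    have hcomb : lam * (CN / K) + mu * (1 / K) = CN1 / K := by
      rw [hlam, hmu]; field_simp; ring
    have hconv := (convexOn_pow (m + 1)).2
      (Set.mem_Ici.mpr (by positivity : (0:ℝ) ≤ CN / K))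
      (Set.mem_Ici.mpr (by positivity : (0:ℝ) ≤ 1 / K))
      hlam0 hmu0.le hsum
    simp only [smul_eq_mul] at hconv
    rw [hcomb] at hconv
    -- hconv : (CN1/K)^(m+1) ≤ lam * (CN/K)^(m+1) + mu * (1/K)^(m+1)
    have hBpos : 0 < (CN1 / K) ^ (m + 1) := by positivity
    have hpow : (CN1 / K) ^ (m + 2) = (CN1 / K) ^ (m + 1) * (CN1 / K) := by ring
    rw [hpow] at heqN1
    -- g(CN1) < 1 - χ
    have hg1 : CN1 - χ * (CN1 / K) ^ (m + 1) < 1 - χ := by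
      nlinarith [mul_pos (mul_pos hχ0 hBpos) (by linarith : (0:ℝ) < 1 - CN1 / K)]
    -- CN1 as a convex combination of CN and 1
    have hCN1eq : CN1 = lam * CN + mu := by
      rw [hlam, hmu]; field_simp; ring
    -- 1/K^(m+1) < 1
    have hKinv : (1 / K) ^ (m + 1) < 1 :=
      pow_lt_one₀ (by positivity) (by rw [div_lt_one hK0]; linarith) (by omega)
    have hmul : χ * (CN1 / K) ^ (m + 1) ≤
        χ * (lam * (CN / K) ^ (m + 1) + mu * (1 / K) ^ (m + 1)) :=
      mul_le_mul_of_nonneg_left hconv hχ0.le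
    have hlamN : lam * (CN - χ * (CN / K) ^ (m + 1)) = lam * (1 - χ) := by rw [heqN]
    nlinarith [mul_pos (mul_pos hmu0 hχ0) (by linarith : (0:ℝ) < 1 - (1 / K) ^ (m + 1))]
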